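/- For any loop L, each commutator-associator subloop L_i is a fully invariant normal subloop of L (preserved by every endomorphism of L), and the quotient L_i/L_{i+1} is an abelian group. -/
import Mathlib


/-- A loop: a quasigroup with a two-sided identity. -/
class Loop (α : Type*) extends Mul α, One α where
  ldiv : α → α → α
  rdiv : α → α → α
  one_mul : ∀ a : α, 1 * a = a
  mul_one : ∀ a : α, a * 1 = a
  mul_ldiv : ∀ a b : α, a * ldiv a b = b
  ldiv_mul : ∀ a b : α, ldiv a (a * b) = b
  rdiv_mul : ∀ a b : α, rdiv a b * b = a
  mul_rdiv : ∀ a b : α, rdiv (a * b) b = a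

namespace Loop

variable {α : Type*} [Loop α]

/-- The commutator `[a,b] = (ba)\(ab)`. -/
def comm (a b : α) : α := ldiv (b * a) (a * b)

/-- The associator `(a,b,c) = (a(bc))\((ab)c)`. -/
def assoc (a b c : α) : α := ldiv (a * (b * c)) ((a * b) * c)

/-- The associator deviation indexed by a list of indices `αs = [α_n, ..., α_1]`
(stored with the *last* index first) applied to a list of arguments.
Level `0` (empty index list) is the associator. -/
def dev : List ℕ → List α → α
  | [], [a, b, c] => assoc a b c
  | (k :: rest), args =>
      let A : α → α := fun x => dev rest (args.take (k - 1) ++ x :: args.drop (k + 1))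
      ldiv (A (args.getD (k - 1) 1) * A (args.getD k 1))
        (A (args.getD (k - 1) 1 * args.getD k 1))
  | _, _ => 1

/-- A subset is a subloop if it contains `1` and is closed under
multiplication and both divisions. -/
def IsSubloop (S : Set α) : Prop :=
  (1 : α) ∈ S ∧ ∀ a ∈ S, ∀ b ∈ S, a * b ∈ S ∧ ldiv a b ∈ S ∧ rdiv a b ∈ S

/-- A subloop is normal if `xN = Nx`, `(Nx)y = N(xy)` and `y(xN) = (yx)N`. -/
def IsNormal (S : Set α) : Prop :=
  IsSubloop S ∧
  (∀ x : α, {z | ∃ n ∈ S, z = x * n} = {z | ∃ n ∈ S, z = n * x}) ∧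
  (∀ x y : α, {z | ∃ n ∈ S, z = (n * x) * y} = {z | ∃ n ∈ S, z = n * (x * y)}) ∧
  (∀ x y : α, {z | ∃ n ∈ S, z = y * (x * n)} = {z | ∃ n ∈ S, z = (y * x) * n})

/-- `N/M` is central in `L/M`: all commutators and associators involving an
element of `N` lie in `M`. -/
def CentralMod (N M : Set α) : Prop :=
  ∀ n ∈ N, ∀ x y : α,
    comm n x ∈ M ∧ comm x n ∈ M ∧
    assoc n x y ∈ M ∧ assoc x n y ∈ M ∧ assoc x y n ∈ M

/-- `[N,L]`: the smallest normal subloop `M` such that `N/M` is central in `L/M`. -/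
def bracket (N : Set α) : Set α := ⋂₀ {M | IsNormal M ∧ CentralMod N M}

end Loop

/-- The lower central series of a loop: `γ 1 = L`, `γ (i+1) = [γ i, L]`. -/
def Loop.gamma (α : Type*) [Loop α] : ℕ → Set α
  | 0 => Set.univ
  | 1 => Set.univ
  | (n + 2) => Loop.bracket (Loop.gamma α (n + 1))

namespace Loop

variable {α : Type*} [Loop α]

/-- A family `M i` of normal subloops is admissible for the
commutator-associator filtration. -/
def Admissible (M : ℕ → Set α) : Prop :=
  (∀ i, IsNormal (M i)) ∧ M 1 = Set.univ ∧
  (∀ i p q, 1 ≤ p → 1 ≤ q → i ≤ p + q →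
    ∀ a ∈ M p, ∀ b ∈ M q, comm a b ∈ M i) ∧
  (∀ i p q r, 1 ≤ p → 1 ≤ q → 1 ≤ r → i ≤ p + q + r →
    ∀ a ∈ M p, ∀ b ∈ M q, ∀ c ∈ M r, assoc a b c ∈ M i) ∧
  (∀ (i : ℕ) (idx ps : List ℕ) (xs : List α), idx ≠ [] →
    ps.length = idx.length + 3 → xs.length = idx.length + 3 →
    (∀ j < idx.length, 1 ≤ idx.getD j 0 ∧ idx.getD j 0 ≤ (idx.length - j) + 2) →
    (∀ j < ps.length, 1 ≤ ps.getD j 0 ∧ xs.getD j 1 ∈ M (ps.getD j 0)) →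
    i ≤ ps.sum → dev idx xs ∈ M i)

/-- The commutator-associator filtration: the smallest admissible family. -/
def casub (α : Type*) [Loop α] (i : ℕ) : Set α :=
  ⋂₀ {S | ∃ M : ℕ → Set α, Admissible M ∧ S = M i}

/-- Congruence modulo a (normal) subloop: `x ≡ y mod N` iff `x ∈ yN`. -/
def ModEq (N : Set α) (x y : α) : Prop := ∃ n ∈ N, x = y * n

/-- Loop homomorphisms: maps preserving multiplication. -/
def IsLoopHom {β : Type*} [Loop β] (φ : α → β) : Prop :=
  ∀ a b : α, φ (a * b) = φ a * φ b

/-- The subloop generated by a subset. -/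
def closure (S : Set α) : Set α := ⋂₀ {T | IsSubloop T ∧ S ⊆ T}

/-- Left-normed powers: `ypow y m = ((...(yy)y)...)y`. -/
def ypow (y : α) : ℕ → α
  | 0 => 1
  | (m + 1) => ypow y m * y

end Loop

section Higman

variable {L B : Type*} [Loop L] [AddCommGroup B]

/-- Multiplication in Higman's loop `(L, B)`. -/
def hmul (f : L → L → B) (x y : L × B) : L × B :=
  (x.1 * y.1, x.2 + y.2 + f x.1 y.1)

/-- Left division in Higman's loop: `(l2,b2)\(l1,b1) = (l2\l1, b1-b2-f(l2, l2\l1))`. -/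
def hldiv (f : L → L → B) (x y : L × B) : L × B :=
  (Loop.ldiv x.1 y.1, y.2 - x.2 - f x.1 (Loop.ldiv x.1 y.1))

/-- Right division in Higman's loop: `(l1,b1)/(l2,b2) = (l1/l2, b1-b2-f(l1/l2, l2))`. -/
def hrdiv (f : L → L → B) (x y : L × B) : L × B :=
  (Loop.rdiv x.1 y.1, x.2 - y.2 - f (Loop.rdiv x.1 y.1) y.1)

/-- The commutator in Higman's loop. -/
def hcomm (f : L → L → B) (x y : L × B) : L × B :=
  hldiv f (hmul f y x) (hmul f x y)

/-- The associator in Higman's loop. -/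
def hassoc (f : L → L → B) (x y z : L × B) : L × B :=
  hldiv f (hmul f x (hmul f y z)) (hmul f (hmul f x y) z)

end Higman

section CAProofAux

open Loop

variable {α : Type*} [Loop α]

private theorem hom_one' {β : Type*} [Loop β] {φ : α → β} (hφ : Loop.IsLoopHom φ) :
    φ 1 = 1 := by
  have h1 : φ 1 * φ 1 = φ 1 * 1 := by
    rw [Loop.mul_one]; rw [← hφ 1 1, Loop.mul_one]
  have := congrArg (Loop.ldiv (φ 1)) h1
  rwa [Loop.ldiv_mul, Loop.ldiv_mul] at this

private theorem hom_ldiv' {β : Type*} [Loop β] {φ : α → β} (hφ : Loop.IsLoopHom φ)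
    (a b : α) : φ (Loop.ldiv a b) = Loop.ldiv (φ a) (φ b) := by
  have h1 : φ a * φ (Loop.ldiv a b) = φ b := by rw [← hφ, Loop.mul_ldiv]
  rw [← h1, Loop.ldiv_mul]

private theorem hom_rdiv' {β : Type*} [Loop β] {φ : α → β} (hφ : Loop.IsLoopHom φ)
    (a b : α) : φ (Loop.rdiv a b) = Loop.rdiv (φ a) (φ b) := by
  have h1 : φ (Loop.rdiv a b) * φ b = φ a := by rw [← hφ, Loop.rdiv_mul]
  rw [← h1, Loop.mul_rdiv]

/-- Normal closure conditions, elementwise. -/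
private def NC (C : Set α) : Prop :=
  Loop.IsSubloop C ∧
  (∀ x : α, ∀ n ∈ C, Loop.rdiv (x * n) x ∈ C) ∧
  (∀ x : α, ∀ n ∈ C, Loop.ldiv x (n * x) ∈ C) ∧
  (∀ x y : α, ∀ n ∈ C, Loop.rdiv ((n * x) * y) (x * y) ∈ C) ∧
  (∀ x y : α, ∀ n ∈ C, Loop.rdiv (Loop.rdiv (n * (x * y)) y) x ∈ C) ∧
  (∀ x y : α, ∀ n ∈ C, Loop.ldiv (y * x) (y * (x * n)) ∈ C) ∧
  (∀ x y : α, ∀ n ∈ C, Loop.ldiv x (Loop.ldiv y ((y * x) * n)) ∈ C)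

private theorem isNormal_iff_nc (C : Set α) : Loop.IsNormal C ↔ NC C := by
  constructor
  · rintro ⟨hs, h1, h2, h3⟩
    refine ⟨hs, ?_, ?_, ?_, ?_, ?_, ?_⟩
    · intro x n hn
      obtain ⟨m, hm, hmx⟩ : x * n ∈ {z | ∃ m ∈ C, z = m * x} := by
        rw [← h1 x]; exact ⟨n, hn, rfl⟩
      have : Loop.rdiv (x * n) x = m := by rw [hmx, Loop.mul_rdiv]
      rwa [this]
    · intro x n hn
      obtain ⟨m, hm, hmx⟩ : n * x ∈ {z | ∃ m ∈ C, z = x * m} := by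
        rw [h1 x]; exact ⟨n, hn, rfl⟩
      have : Loop.ldiv x (n * x) = m := by rw [hmx, Loop.ldiv_mul]
      rwa [this]
    · intro x y n hn
      obtain ⟨m, hm, hmx⟩ : (n * x) * y ∈ {z | ∃ m ∈ C, z = m * (x * y)} := by
        rw [← h2 x y]; exact ⟨n, hn, rfl⟩
      have : Loop.rdiv ((n * x) * y) (x * y) = m := by rw [hmx, Loop.mul_rdiv]
      rwa [this]
    · intro x y n hn
      obtain ⟨m, hm, hmx⟩ : n * (x * y) ∈ {z | ∃ m ∈ C, z = (m * x) * y} := by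
        rw [h2 x y]; exact ⟨n, hn, rfl⟩
      have : Loop.rdiv (Loop.rdiv (n * (x * y)) y) x = m := by
        rw [hmx, Loop.mul_rdiv, Loop.mul_rdiv]
      rwa [this]
    · intro x y n hn
      obtain ⟨m, hm, hmx⟩ : y * (x * n) ∈ {z | ∃ m ∈ C, z = (y * x) * m} := by
        rw [← h3 x y]; exact ⟨n, hn, rfl⟩
      have : Loop.ldiv (y * x) (y * (x * n)) = m := by rw [hmx, Loop.ldiv_mul]
      rwa [this]
    · intro x y n hn
      obtain ⟨m, hm, hmx⟩ : (y * x) * n ∈ {z | ∃ m ∈ C, z = y * (x * m)} := by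
        rw [h3 x y]; exact ⟨n, hn, rfl⟩
      have : Loop.ldiv x (Loop.ldiv y ((y * x) * n)) = m := by
        rw [hmx, Loop.ldiv_mul, Loop.ldiv_mul]
      rwa [this]
  · rintro ⟨hs, c1, c2, c3, c4, c5, c6⟩
    refine ⟨hs, ?_, ?_, ?_⟩
    · intro x
      ext z
      simp only [Set.mem_setOf_eq]
      constructor
      · rintro ⟨n, hn, rfl⟩
        exact ⟨Loop.rdiv (x * n) x, c1 x n hn, (Loop.rdiv_mul _ _).symm⟩
      · rintro ⟨n, hn, rfl⟩
        exact ⟨Loop.ldiv x (n * x), c2 x n hn, (Loop.mul_ldiv _ _).symm⟩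
    · intro x y
      ext z
      simp only [Set.mem_setOf_eq]
      constructor
      · rintro ⟨n, hn, rfl⟩
        exact ⟨Loop.rdiv ((n * x) * y) (x * y), c3 x y n hn, (Loop.rdiv_mul _ _).symm⟩
      · rintro ⟨n, hn, rfl⟩
        refine ⟨Loop.rdiv (Loop.rdiv (n * (x * y)) y) x, c4 x y n hn, ?_⟩
        rw [Loop.rdiv_mul, Loop.rdiv_mul]
    · intro x y
      ext z
      simp only [Set.mem_setOf_eq]
      constructor
      · rintro ⟨n, hn, rfl⟩
        exact ⟨Loop.ldiv (y * x) (y * (x * n)), c5 x y n hn, (Loop.mul_ldiv _ _).symm⟩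
      · rintro ⟨n, hn, rfl⟩
        refine ⟨Loop.ldiv x (Loop.ldiv y ((y * x) * n)), c6 x y n hn, ?_⟩
        rw [Loop.mul_ldiv, Loop.mul_ldiv]

private theorem mem_casub_iff {x : α} {i : ℕ} :
    x ∈ Loop.casub α i ↔ ∀ M : ℕ → Set α, Loop.Admissible M → x ∈ M i := by
  constructor
  · intro h M hM
    exact h (M i) ⟨M, hM, rfl⟩
  · rintro h S ⟨M, hM, rfl⟩
    exact h M hM

private theorem admissible_casub : Loop.Admissible (Loop.casub α) := by
  refine ⟨?_, ?_, ?_, ?_, ?_⟩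
  · intro i
    rw [isNormal_iff_nc]
    refine ⟨⟨?_, ?_⟩, ?_, ?_, ?_, ?_, ?_, ?_⟩
    · exact fun S ⟨M, hM, hS⟩ => hS ▸ ((hM.1 i).1.1)
    · rintro a ha b hb
      refine ⟨?_, ?_, ?_⟩ <;>
        · rintro S ⟨M, hM, rfl⟩
          have h := (hM.1 i).1.2 a (ha _ ⟨M, hM, rfl⟩) b (hb _ ⟨M, hM, rfl⟩)
          tauto
    · intro x n hn
      rintro S ⟨M, hM, rfl⟩
      exact ((isNormal_iff_nc (M i)).1 (hM.1 i)).2.1 x n (hn _ ⟨M, hM, rfl⟩)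
    · intro x n hn
      rintro S ⟨M, hM, rfl⟩
      exact ((isNormal_iff_nc (M i)).1 (hM.1 i)).2.2.1 x n (hn _ ⟨M, hM, rfl⟩)
    · intro x y n hn
      rintro S ⟨M, hM, rfl⟩
      exact ((isNormal_iff_nc (M i)).1 (hM.1 i)).2.2.2.1 x y n (hn _ ⟨M, hM, rfl⟩)
    · intro x y n hn
      rintro S ⟨M, hM, rfl⟩
      exact ((isNormal_iff_nc (M i)).1 (hM.1 i)).2.2.2.2.1 x y n (hn _ ⟨M, hM, rfl⟩)
    · intro x y n hn
      rintro S ⟨M, hM, rfl⟩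
      exact ((isNormal_iff_nc (M i)).1 (hM.1 i)).2.2.2.2.2.1 x y n (hn _ ⟨M, hM, rfl⟩)
    · intro x y n hn
      rintro S ⟨M, hM, rfl⟩
      exact ((isNormal_iff_nc (M i)).1 (hM.1 i)).2.2.2.2.2.2 x y n (hn _ ⟨M, hM, rfl⟩)
  · ext x
    simp only [Set.mem_univ, iff_true]
    rintro S ⟨M, hM, rfl⟩
    rw [hM.2.1]
    trivial
  · intro i p q hp hq hpq a ha b hb
    rintro S ⟨M, hM, rfl⟩
    exact hM.2.2.1 i p q hp hq hpq a (ha _ ⟨M, hM, rfl⟩) b (hb _ ⟨M, hM, rfl⟩)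
  · intro i p q r hp hq hr hpqr a ha b hb c hc
    rintro S ⟨M, hM, rfl⟩
    exact hM.2.2.2.1 i p q r hp hq hr hpqr a (ha _ ⟨M, hM, rfl⟩) b (hb _ ⟨M, hM, rfl⟩)
      c (hc _ ⟨M, hM, rfl⟩)
  · intro i idx ps xs hne hlp hlx hidx hps hsum
    rintro S ⟨M, hM, rfl⟩
    refine hM.2.2.2.2 i idx ps xs hne hlp hlx hidx ?_ hsum
    intro j hj
    exact ⟨(hps j hj).1, (hps j hj).2 _ ⟨M, hM, rfl⟩⟩

private theorem getD_map' {φ : α → α} (hφ : Loop.IsLoopHom φ) :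
    ∀ (xs : List α) (j : ℕ), φ (xs.getD j 1) = (xs.map φ).getD j 1
  | [], j => by simp [hom_one' hφ]
  | (a :: t), 0 => by simp
  | (a :: t), (j+1) => by simpa using getD_map' hφ t j

private theorem hom_dev {φ : α → α} (hφ : Loop.IsLoopHom φ) :
    ∀ (idx : List ℕ) (xs : List α), φ (Loop.dev idx xs) = Loop.dev idx (xs.map φ)
  | [], [] => by simp [Loop.dev, hom_one' hφ]
  | [], [a] => by simp [Loop.dev, hom_one' hφ]
  | [], [a, b] => by simp [Loop.dev, hom_one' hφ]
  | [], [a, b, c] => by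
      have hm : ∀ a b : α, φ (a * b) = φ a * φ b := hφ
      simp [Loop.dev, Loop.assoc, hom_ldiv' hφ, hm]
  | [], (a :: b :: c :: d :: t) => by simp [Loop.dev, hom_one' hφ]
  | (k :: rest), xs => by
      have hA : ∀ x : α, φ (Loop.dev rest (xs.take (k-1) ++ x :: xs.drop (k+1)))
          = Loop.dev rest ((xs.map φ).take (k-1) ++ φ x :: (xs.map φ).drop (k+1)) := by
        intro x
        rw [hom_dev hφ rest]
        simp [List.map_take, List.map_drop]
      show φ (Loop.ldiv _ _) = Loop.ldiv _ _
      have hm : ∀ a b : α, φ (a * b) = φ a * φ b := hφ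
      rw [hom_ldiv' hφ, hm, hA, hA, hA]
      simp only [hm, getD_map' hφ]

private theorem admissible_preimage {φ : α → α} (hφ : Loop.IsLoopHom φ) :
    Loop.Admissible (fun i => φ ⁻¹' Loop.casub α i) := by
  have hA := admissible_casub (α := α)
  have hm : ∀ a b : α, φ (a * b) = φ a * φ b := hφ
  refine ⟨?_, ?_, ?_, ?_, ?_⟩
  · intro i
    have hC := (isNormal_iff_nc (Loop.casub α i)).1 (hA.1 i)
    obtain ⟨⟨h1, hcl⟩, c1, c2, c3, c4, c5, c6⟩ := hC
    rw [isNormal_iff_nc]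
    refine ⟨⟨?_, ?_⟩, ?_, ?_, ?_, ?_, ?_, ?_⟩
    · show φ 1 ∈ Loop.casub α i
      rw [hom_one' hφ]; exact h1
    · intro a ha b hb
      refine ⟨?_, ?_, ?_⟩ <;> simp only [Set.mem_preimage, hm, hom_ldiv' hφ, hom_rdiv' hφ]
      · exact (hcl _ ha _ hb).1
      · exact (hcl _ ha _ hb).2.1
      · exact (hcl _ ha _ hb).2.2
    · intro x n hn
      simp only [Set.mem_preimage, hom_rdiv' hφ, hm]
      exact c1 _ _ hn
    · intro x n hn
      simp only [Set.mem_preimage, hom_ldiv' hφ, hm]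
      exact c2 _ _ hn
    · intro x y n hn
      simp only [Set.mem_preimage, hom_rdiv' hφ, hm]
      exact c3 _ _ _ hn
    · intro x y n hn
      simp only [Set.mem_preimage, hom_rdiv' hφ, hm]
      exact c4 _ _ _ hn
    · intro x y n hn
      simp only [Set.mem_preimage, hom_ldiv' hφ, hm]
      exact c5 _ _ _ hn
    · intro x y n hn
      simp only [Set.mem_preimage, hom_ldiv' hφ, hm]
      exact c6 _ _ _ hn
  · ext x
    simp [hA.2.1]
  · intro i p q hp hq hpq a ha b hb
    show φ (Loop.comm a b) ∈ Loop.casub α i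
    have : φ (Loop.comm a b) = Loop.comm (φ a) (φ b) := by
      simp only [Loop.comm, hom_ldiv' hφ, hm]
    rw [this]
    exact hA.2.2.1 i p q hp hq hpq _ ha _ hb
  · intro i p q r hp hq hr hpqr a ha b hb c hc
    show φ (Loop.assoc a b c) ∈ Loop.casub α i
    have : φ (Loop.assoc a b c) = Loop.assoc (φ a) (φ b) (φ c) := by
      simp only [Loop.assoc, hom_ldiv' hφ, hm]
    rw [this]
    exact hA.2.2.2.1 i p q r hp hq hr hpqr _ ha _ hb _ hc
  · intro i idx ps xs hne hlp hlx hidx hps hsum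
    show φ (Loop.dev idx xs) ∈ Loop.casub α i
    rw [hom_dev hφ]
    refine hA.2.2.2.2 i idx ps (xs.map φ) hne hlp (by simpa using hlx) hidx ?_ hsum
    intro j hj
    refine ⟨(hps j hj).1, ?_⟩
    rw [← getD_map' hφ]
    exact (hps j hj).2

end CAProofAux

/-- each commutator-associator subloop `L_i` is a fully
invariant normal subloop of `L` (preserved by every endomorphism), and the
quotient `L_i/L_{i+1}` is an abelian group: all commutators and associators of
elements of `L_i` lie in `L_{i+1}`. -/
theorem casub_normal_fully_invariant {L : Type*} [Loop L] :
    ∀ i : ℕ, 1 ≤ i →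
      Loop.IsNormal (Loop.casub L i) ∧
      (∀ φ : L → L, Loop.IsLoopHom φ → φ '' Loop.casub L i ⊆ Loop.casub L i) ∧
      (∀ a ∈ Loop.casub L i, ∀ b ∈ Loop.casub L i,
        Loop.comm a b ∈ Loop.casub L (i + 1)) ∧
      (∀ a ∈ Loop.casub L i, ∀ b ∈ Loop.casub L i, ∀ c ∈ Loop.casub L i,
        Loop.assoc a b c ∈ Loop.casub L (i + 1)) := by
  intro i hi
  have hA := admissible_casub (α := L)
  refine ⟨hA.1 i, ?_, ?_, ?_⟩
  · intro φ hφ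
    rintro _ ⟨x, hx, rfl⟩
    exact hx _ ⟨_, admissible_preimage hφ, rfl⟩
  · intro a ha b hb
    exact hA.2.2.1 (i + 1) i i hi hi (by omega) a ha b hb
  · intro a ha b hb c hc
    exact hA.2.2.2.1 (i + 1) i i i hi hi hi (by omega) a ha b hb c hc
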